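/- Let k be a field of characteristic 2 and let δ be the k-derivation of k[x,y] with δ(x) = x² and δ(y) = y². Then the ring of constants k[x,y]^δ equals k[x², y², x²y + xy²], and this ring is isomorphic as a k-algebra to k[X,Y,Z]/(Z² + X²Y + XY²) via X ↦ x², Y ↦ y², Z ↦ x²y + xy². -/

import Mathlib

open MvPolynomial

section
variable {k : Type*} [Field k] [CharP k 2]
set_option linter.unusedSectionVars false

noncomputable def EE (k : Type*) [Field k] : MvPolynomial (Fin 2) k →ₐ[k] MvPolynomial (Fin 2) k :=
  aeval (fun i => (X i) ^ 2)

lemma finsupp2 (u : Fin 2 →₀ ℕ) : u = Finsupp.single 0 (u 0) + Finsupp.single 1 (u 1) := by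
  ext i
  fin_cases i <;> simp [Finsupp.single_apply]

lemma mono2 (u : Fin 2 →₀ ℕ) (a : k) :
    monomial u a = C a * X 0 ^ (u 0) * X 1 ^ (u 1) := by
  rw [C_mul_X_pow_eq_monomial (n := u 0), X_pow_eq_monomial, monomial_mul, mul_one]
  exact congrArg (fun s => monomial s a) (finsupp2 u)

lemma EE_X (i : Fin 2) : EE k (X i) = X i ^ 2 := aeval_X _ i

lemma EE_monomial (u : Fin 2 →₀ ℕ) (a : k) :
    EE k (monomial u a) = monomial (2 • u) a := by
  rw [mono2, map_mul, map_mul, map_pow, map_pow, EE_X, EE_X]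
  have hC : EE k (C a) = C a := algHom_C _ a
  rw [hC, ← pow_mul, ← pow_mul, mono2 (2 • u) a]
  simp [mul_comm]

lemma EE_coeff (A : MvPolynomial (Fin 2) k) (m : Fin 2 →₀ ℕ) :
    coeff (2 • m) (EE k A) = coeff m A := by
  induction A using MvPolynomial.induction_on' with
  | monomial u a =>
      rw [EE_monomial, coeff_monomial, coeff_monomial]
      congr 1
      simp only [eq_iff_iff]
      constructor
      · intro h
        ext i
        have := DFunLike.congr_fun h i
        simpa using (Nat.eq_of_mul_eq_mul_left two_pos (by simpa using this))
      · rintro rfl; rfl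
  | add p q hp hq => simp [map_add, coeff_add, hp, hq]

lemma EE_inj : Function.Injective (EE k) := by
  intro A B h
  ext m
  rw [← EE_coeff A m, ← EE_coeff B m, h]

lemma pderiv_EE (i : Fin 2) (A : MvPolynomial (Fin 2) k) : pderiv i (EE k A) = 0 := by
  have h2 : (2 : MvPolynomial (Fin 2) k) = 0 := by
    exact_mod_cast CharP.cast_eq_zero (MvPolynomial (Fin 2) k) 2
  induction A using MvPolynomial.induction_on with
  | C a => simp [algHom_C]
  | add p q hp hq => simp [map_add, hp, hq]
  | mul_X p j hp =>
      rw [map_mul, EE_X]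
      rw [Derivation.leibniz]
      simp only [smul_eq_mul, hp, mul_zero, zero_add]
      rw [pow_two, Derivation.leibniz]
      simp only [smul_eq_mul, pderiv_X]
      by_cases h : j = i
      · subst h
        simp only [Pi.single_eq_same, mul_one]
        rw [show (X j + X j : MvPolynomial (Fin 2) k) = 2 * X j by ring, h2]
        ring
      · simp [Pi.single_eq_of_ne h]

lemma inj_pair (P Q : MvPolynomial (Fin 2) k)
    (hPQ : EE k P + X 1 * EE k Q = 0) : P = 0 ∧ Q = 0 := by
  have h1 := congrArg (pderiv 1) hPQ
  simp only [map_add, map_zero, Derivation.leibniz, smul_eq_mul, pderiv_EE, mul_zero,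
    zero_add, add_zero, pderiv_X_self, mul_one] at h1
  have hQ : Q = 0 := EE_inj (by simpa using h1)
  subst hQ
  simp only [map_zero, mul_zero, add_zero] at hPQ
  exact ⟨EE_inj (by simpa using hPQ), rfl⟩

lemma inj4 (A B C D : MvPolynomial (Fin 2) k)
    (h : EE k A + X 0 * EE k B + X 1 * EE k C + X 0 * (X 1 * EE k D) = 0) :
    A = 0 ∧ B = 0 ∧ C = 0 ∧ D = 0 := by
  have d0 := congrArg (pderiv 0) h
  simp only [map_add, map_zero, Derivation.leibniz, smul_eq_mul, pderiv_EE, mul_zero,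
    zero_add, add_zero, pderiv_X_self, mul_one,
    pderiv_X_of_ne (show (1:Fin 2) ≠ 0 by decide)] at d0
  have hBD : EE k B + X 1 * EE k D = 0 := by linear_combination d0
  obtain ⟨hB, hD⟩ := inj_pair _ _ hBD
  subst hB; subst hD
  simp only [map_zero, mul_zero, add_zero] at h
  obtain ⟨hA, hC⟩ := inj_pair _ _ h
  exact ⟨hA, rfl, hC, rfl⟩

lemma surj4 (f : MvPolynomial (Fin 2) k) :
    ∃ A B C D, f = EE k A + X 0 * EE k B + X 1 * EE k C + X 0 * (X 1 * EE k D) := by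
  induction f using MvPolynomial.induction_on' with
  | add p q hp hq =>
      obtain ⟨A, B, C, D, rfl⟩ := hp
      obtain ⟨A', B', C', D', rfl⟩ := hq
      exact ⟨A + A', B + B', C + C', D + D', by simp only [map_add]; ring⟩
  | monomial u a =>
      obtain ⟨q0, r0, hr0, h0⟩ : ∃ q r, r < 2 ∧ u 0 = 2 * q + r :=
        ⟨u 0 / 2, u 0 % 2, Nat.mod_lt _ two_pos, by omega⟩
      obtain ⟨q1, r1, hr1, h1⟩ : ∃ q r, r < 2 ∧ u 1 = 2 * q + r :=
        ⟨u 1 / 2, u 1 % 2, Nat.mod_lt _ two_pos, by omega⟩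
      set v : Fin 2 →₀ ℕ := Finsupp.single 0 q0 + Finsupp.single 1 q1 with hv
      have hE : EE k (monomial v a) = C a * X 0 ^ (2 * q0) * X 1 ^ (2 * q1) := by
        rw [EE_monomial, mono2]
        simp [hv, Finsupp.single_apply, mul_comm]
      have key : monomial u a = X 0 ^ r0 * (X 1 ^ r1 * EE k (monomial v a)) := by
        rw [hE, mono2 u a, h0, h1]
        ring
      interval_cases r0 <;> interval_cases r1
      · exact ⟨monomial v a, 0, 0, 0, by
          simp only [map_zero, mul_zero, add_zero]; rw [key]; ring⟩
      · exact ⟨0, 0, monomial v a, 0, by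
          simp only [map_zero, mul_zero, add_zero, zero_add]; rw [key]; ring⟩
      · exact ⟨0, monomial v a, 0, 0, by
          simp only [map_zero, mul_zero, add_zero, zero_add]; rw [key]; ring⟩
      · exact ⟨0, 0, 0, monomial v a, by
          simp only [map_zero, mul_zero, add_zero, zero_add]; rw [key]; ring⟩

lemma two_zero : (2 : MvPolynomial (Fin 2) k) = 0 := by
  exact_mod_cast CharP.cast_eq_zero (MvPolynomial (Fin 2) k) 2

lemma prime_X0 : Prime (X 0 : MvPolynomial (Fin 2) k) := by
  rw [← MulEquiv.prime_iff (finSuccEquiv k 1).toMulEquiv]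
  simpa [finSuccEquiv_X_zero] using (Polynomial.prime_X
    (R := MvPolynomial (Fin 1) k))

lemma prime_X1 : Prime (X 1 : MvPolynomial (Fin 2) k) := by
  rw [← MulEquiv.prime_iff (renameEquiv k (Equiv.swap (0 : Fin 2) 1)).toMulEquiv]
  simpa [renameEquiv_apply, rename_X] using prime_X0 (k := k)

variable (δ : Derivation k (MvPolynomial (Fin 2) k) (MvPolynomial (Fin 2) k))

lemma delta_sq (a : MvPolynomial (Fin 2) k) : δ (a ^ 2) = 0 := by
  rw [pow_two, Derivation.leibniz, smul_eq_mul]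
  linear_combination (a * δ a) * two_zero (k := k)

lemma delta_EE (A : MvPolynomial (Fin 2) k) : δ (EE k A) = 0 := by
  induction A using MvPolynomial.induction_on with
  | C a =>
      rw [algHom_C]; simp
  | add p q hp hq => rw [map_add, map_add, hp, hq, add_zero]
  | mul_X p j hp =>
      rw [map_mul, EE_X, Derivation.leibniz, hp, delta_sq, smul_zero, smul_zero, add_zero]

lemma constants_decomp (hx : δ (X 0) = X 0 ^ 2) (hy : δ (X 1) = X 1 ^ 2)
    (f : MvPolynomial (Fin 2) k) (hf : δ f = 0) :
    ∃ A G, f = EE k A + (X 0 ^ 2 * X 1 + X 0 * X 1 ^ 2) * EE k G := by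
  obtain ⟨A, B, C, D, rfl⟩ := surj4 f
  simp only [map_add, Derivation.leibniz, delta_EE, hx, hy, smul_eq_mul, mul_zero,
    zero_add, add_zero] at hf
  have key : EE k (X 0 * B + X 1 * C) + X 0 * EE k (X 1 * D) + X 1 * EE k (X 0 * D)
      + X 0 * (X 1 * EE k 0) = 0 := by
    simp only [map_add, map_mul, EE_X, map_zero]
    linear_combination hf
  obtain ⟨h1, h2, h3, -⟩ := inj4 _ _ _ _ key
  have hD : D = 0 := by
    rcases mul_eq_zero.mp h2 with h | h
    · exact absurd h (X_ne_zero 1)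
    · exact h
  subst hD
  have hXB : X 0 * B = X 1 * C := by
    linear_combination h1 - (X 1 * C) * two_zero (k := k)
  have hdvd : (X 1 : MvPolynomial (Fin 2) k) ∣ X 0 * B := ⟨C, hXB⟩
  rcases (prime_X1.2.2 _ _ hdvd) with h | h
  · rw [X_dvd_X] at h
    exact absurd h (by decide)
  obtain ⟨G, rfl⟩ := h
  have hC : C = X 0 * G := by
    have : X 1 * C = X 1 * (X 0 * G) := by linear_combination -hXB
    exact mul_left_cancel₀ (X_ne_zero 1) this
  subst hC
  refine ⟨A, G, ?_⟩
  simp only [map_mul, EE_X, map_zero]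
  ring

lemma EE_mem (P : MvPolynomial (Fin 2) k) :
    EE k P ∈ Algebra.adjoin k
      ({X 0 ^ 2, X 1 ^ 2, X 0 ^ 2 * X 1 + X 0 * X 1 ^ 2} : Set (MvPolynomial (Fin 2) k)) := by
  have h1 : EE k P ∈ (aeval (fun i : Fin 2 => (X i : MvPolynomial (Fin 2) k) ^ 2)).range :=
    ⟨P, rfl⟩
  rw [← Algebra.adjoin_range_eq_range_aeval] at h1
  refine Algebra.adjoin_mono ?_ h1
  rintro _ ⟨i, rfl⟩
  fin_cases i
  · exact Set.mem_insert _ _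
  · exact Set.mem_insert_of_mem _ (Set.mem_insert _ _)

lemma range_vec (a b c : MvPolynomial (Fin 2) k) :
    Set.range ![a, b, c] = {a, b, c} := by
  ext z
  constructor
  · rintro ⟨i, rfl⟩
    fin_cases i
    · exact Set.mem_insert _ _
    · exact Set.mem_insert_of_mem _ (Set.mem_insert _ _)
    · exact Set.mem_insert_of_mem _ (Set.mem_insert_of_mem _ rfl)
  · rintro (rfl | rfl | rfl)
    exacts [⟨0, rfl⟩, ⟨1, rfl⟩, ⟨2, rfl⟩]

noncomputable def FF (k : Type*) [Field k] :
    MvPolynomial (Fin 3) k ≃ₐ[k] Polynomial (MvPolynomial (Fin 2) k) :=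
  (renameEquiv k (finRotate 3)).trans (MvPolynomial.finSuccEquiv k 2)

lemma FF_X0 : FF k (X 0) = Polynomial.C (X 0) := by
  rw [FF, AlgEquiv.trans_apply, renameEquiv_apply, rename_X,
    show (finRotate 3) 0 = Fin.succ 0 by decide, finSuccEquiv_X_succ]

lemma FF_X1 : FF k (X 1) = Polynomial.C (X 1) := by
  rw [FF, AlgEquiv.trans_apply, renameEquiv_apply, rename_X,
    show (finRotate 3) 1 = Fin.succ 1 by decide, finSuccEquiv_X_succ]

lemma FF_X2 : FF k (X 2) = Polynomial.X := by
  rw [FF, AlgEquiv.trans_apply, renameEquiv_apply, rename_X,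
    show (finRotate 3) 2 = 0 by decide, finSuccEquiv_X_zero]

lemma FF_rename (a : MvPolynomial (Fin 2) k) :
    FF k (rename Fin.castSucc a) = Polynomial.C a := by
  have hcomp : ((FF k).toAlgHom.comp (rename (Fin.castSucc : Fin 2 → Fin 3)))
      = Polynomial.CAlgHom := by
    apply algHom_ext
    intro i
    fin_cases i
    · show FF k (rename Fin.castSucc (X 0)) = _
      rw [rename_X, show (Fin.castSucc (0 : Fin 2)) = 0 by decide, FF_X0]
      rfl
    · show FF k (rename Fin.castSucc (X 1)) = _
      rw [rename_X, show (Fin.castSucc (1 : Fin 2)) = 1 by decide, FF_X1]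
      rfl
  exact congrArg (fun g => g a) (congrArg DFunLike.coe hcomp)

lemma EE_eq (a : MvPolynomial (Fin 2) k) :
    EE k a = aeval (fun i => (X i : MvPolynomial (Fin 2) k) ^ 2) a := rfl

end

/-- In characteristic 2, for the derivation `δ` of `k[x,y]` with `δ x = x²`, `δ y = y²`, the
ring of constants equals `k[x², y², x²y + xy²]`, and this ring is isomorphic to
`k[X,Y,Z]/(Z² + X²Y + XY²)` via `X ↦ x²`, `Y ↦ y²`, `Z ↦ x²y + xy²` (formalized by saying
the evaluation map `X ↦ x², Y ↦ y², Z ↦ x²y + xy²` has kernel `(Z² + X²Y + XY²)` and range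
`k[x², y², x²y + xy²]`). -/
theorem stmt3 (k : Type*) [Field k] [CharP k 2]
    (δ : Derivation k (MvPolynomial (Fin 2) k) (MvPolynomial (Fin 2) k))
    (hx : δ (X 0) = X 0 ^ 2) (hy : δ (X 1) = X 1 ^ 2)
    (φ : MvPolynomial (Fin 3) k →ₐ[k] MvPolynomial (Fin 2) k)
    (hφ : φ = aeval ![X 0 ^ 2, X 1 ^ 2, X 0 ^ 2 * X 1 + X 0 * X 1 ^ 2]) :
    {f : MvPolynomial (Fin 2) k | δ f = 0} =
      (Algebra.adjoin k {(X 0 ^ 2 : MvPolynomial (Fin 2) k), X 1 ^ 2, X 0 ^ 2 * X 1 + X 0 * X 1 ^ 2} :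
        Set (MvPolynomial (Fin 2) k)) ∧
    φ.range = Algebra.adjoin k {(X 0 ^ 2 : MvPolynomial (Fin 2) k), X 1 ^ 2, X 0 ^ 2 * X 1 + X 0 * X 1 ^ 2} ∧
    RingHom.ker φ.toRingHom =
      Ideal.span {X 2 ^ 2 + X 0 ^ 2 * X 1 + X 0 * X 1 ^ 2} := by
  have hφpg : φ (X 2 ^ 2 + X 0 ^ 2 * X 1 + X 0 * X 1 ^ 2) = 0 := by
    rw [hφ]
    simp only [map_add, map_mul, map_pow, aeval_X, Matrix.cons_val_zero, Matrix.cons_val_one,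
      Matrix.head_cons, Matrix.cons_val_two, Matrix.tail_cons]
    linear_combination (X 0 ^ 4 * X 1 ^ 2 + X 0 ^ 3 * X 1 ^ 3 + X 0 ^ 2 * X 1 ^ 4) * two_zero (k := k)
  have hEa : ∀ a : MvPolynomial (Fin 2) k, φ (rename Fin.castSucc a) = EE k a := by
    intro a
    rw [hφ, aeval_rename, EE_eq,
      show (![X 0 ^ 2, X 1 ^ 2, X 0 ^ 2 * X 1 + X 0 * X 1 ^ 2] ∘ (Fin.castSucc : Fin 2 → Fin 3))
          = (fun i => (X i : MvPolynomial (Fin 2) k) ^ 2) from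
        funext fun i => by fin_cases i <;> rfl]
  refine ⟨?_, ?_, ?_⟩
  · ext f
    simp only [Set.mem_setOf_eq, SetLike.mem_coe]
    constructor
    · intro hf
      obtain ⟨A, G, rfl⟩ := constants_decomp δ hx hy f hf
      refine add_mem (EE_mem A) (mul_mem (Algebra.subset_adjoin ?_) (EE_mem G))
      exact Set.mem_insert_of_mem _ (Set.mem_insert_of_mem _ rfl)
    · intro hf
      refine Algebra.adjoin_induction ?_ ?_ ?_ ?_ hf
      · rintro x (rfl | rfl | rfl)
        · exact delta_sq δ (X 0)
        · exact delta_sq δ (X 1)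
        · simp only [map_add, Derivation.leibniz, hx, hy, smul_eq_mul, delta_sq]
          linear_combination (X 0 ^ 2 * X 1 ^ 2) * two_zero (k := k)
      · intro r; simp
      · intro x y _ _ h1 h2; rw [map_add, h1, h2, add_zero]
      · intro x y _ _ h1 h2; rw [Derivation.leibniz, h1, h2, smul_zero, smul_zero, add_zero]
  · rw [hφ, ← Algebra.adjoin_range_eq_range_aeval, range_vec]
  · set c0 : MvPolynomial (Fin 2) k := X 0 ^ 2 * X 1 + X 0 * X 1 ^ 2 with hc0
    set T : Polynomial (MvPolynomial (Fin 2) k) := Polynomial.X ^ 2 + Polynomial.C c0 with hTdef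
    set pg : MvPolynomial (Fin 3) k := X 2 ^ 2 + X 0 ^ 2 * X 1 + X 0 * X 1 ^ 2 with hpg
    have hFpg : FF k pg = T := by
      rw [hpg, map_add, map_add, map_pow, map_mul, map_pow, map_mul, map_pow, FF_X0, FF_X1,
        FF_X2, hTdef, hc0]
      simp only [map_add, map_mul, map_pow]
      ring
    have hmonic : T.Monic := by
      rw [hTdef]
      exact Polynomial.monic_X_pow_add
        (lt_of_le_of_lt Polynomial.degree_C_le (by norm_num))
    ext q
    simp only [RingHom.mem_ker, AlgHom.toRingHom_eq_coe, RingHom.coe_coe]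
    constructor
    · intro hq
      set P := FF k q with hP
      have hdm := Polynomial.modByMonic_add_div P T
      have hdeg : (P %ₘ T).degree ≤ 1 := by
        have h := Polynomial.degree_modByMonic_lt P hmonic
        have hdT : T.degree = 2 := by
          rw [hTdef]; exact Polynomial.degree_X_pow_add_C (by norm_num) c0
        rw [hdT] at h
        rcases hd : (P %ₘ T).degree with _ | n
        · exact bot_le
        · rw [hd] at h
          have h2 : n < 2 := WithBot.coe_lt_coe.mp h
          exact WithBot.coe_le_coe.mpr (by omega)
      set a := (P %ₘ T).coeff 0 with haa
      set b := (P %ₘ T).coeff 1 with hbb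
      have hrem : P %ₘ T = Polynomial.C b * Polynomial.X + Polynomial.C a :=
        Polynomial.eq_X_add_C_of_degree_le_one hdeg
      have hq_eq : q = pg * (FF k).symm (P /ₘ T)
          + (rename Fin.castSucc a + rename Fin.castSucc b * X 2) := by
        apply (FF k).injective
        rw [map_add, map_mul, hFpg, AlgEquiv.apply_symm_apply, map_add, map_mul, FF_rename,
          FF_rename, FF_X2, ← hP]
        linear_combination hrem - hdm
      have hX2 : φ (X 2) = X 0 ^ 2 * X 1 + X 0 * X 1 ^ 2 := by
        rw [hφ, aeval_X]
        rfl
      have hzero : EE k a + X 0 * EE k (X 1 * b) + X 1 * EE k (X 0 * b)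
          + X 0 * (X 1 * EE k 0) = 0 := by
        have h0 := hq
        rw [hq_eq, map_add, map_mul, hφpg, zero_mul, zero_add, map_add, map_mul, hEa, hEa,
          hX2] at h0
        simp only [map_mul, EE_X, map_zero]
        linear_combination h0
      obtain ⟨ha, hb1, -, -⟩ := inj4 _ _ _ _ hzero
      have hb : b = 0 := by
        rcases mul_eq_zero.mp hb1 with h | h
        · exact absurd h (X_ne_zero 1)
        · exact h
      rw [Ideal.mem_span_singleton]
      exact ⟨(FF k).symm (P /ₘ T), by rw [hq_eq, ha, hb]; simp⟩
    · intro hq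
      rw [Ideal.mem_span_singleton] at hq
      obtain ⟨h, rfl⟩ := hq
      rw [map_mul, hφpg, zero_mul]
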